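/- Let ℰ have Kraus representation ℰ(γ) = Σ_k A_k γ A_k†. Then the operator Θ(ℰ,p) = ℰ̂^⊗p(L_p)·R_p equals Σ_{k₁,...,k_p} A_{k₁}† A_{k₂} ⊗ A_{k₂}† A_{k₃} ⊗ ⋯ ⊗ A_{k_p}† A_{k₁}. -/
import Mathlib


open Matrix BigOperators

/-- Tensor product of a family of operators, in the function-index
representation of `ℋ^⊗p`. -/
noncomputable def tensorFamily (p : ℕ) {n : Type*} [Fintype n]
    (B : Fin p → Matrix n n ℂ) : Matrix (Fin p → n) (Fin p → n) ℂ :=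
  Matrix.of fun x y => ∏ i, B i (x i) (y i)

/-- The left cyclic shift `L_p` on `ℋ^⊗p`. -/
noncomputable def leftShift (p d : ℕ) [NeZero p] :
    Matrix (Fin p → Fin d) (Fin p → Fin d) ℂ :=
  Matrix.of fun x y => if ∀ i, x i = y (i + 1) then 1 else 0

/-- The right cyclic shift `R_p = L_p†` on `ℋ^⊗p`:
`R_p |ξ₁ ⋯ ξ_p⟩ = |ξ_p ξ₁ ⋯ ξ_{p-1}⟩`. -/
noncomputable def rightShift (p d : ℕ) [NeZero p] :
    Matrix (Fin p → Fin d) (Fin p → Fin d) ℂ :=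
  Matrix.of fun x y => if ∀ i, x i = y (i - 1) then 1 else 0

lemma mul_rightShift_apply (p d : ℕ) [NeZero p]
    (M : Matrix (Fin p → Fin d) (Fin p → Fin d) ℂ) (x y : Fin p → Fin d) :
    (M * rightShift p d) x y = M x (fun i => y (i - 1)) := by
  simp only [Matrix.mul_apply, rightShift, Matrix.of_apply]
  rw [Finset.sum_eq_single (fun i => y (i - 1))]
  · simp
  · intro b _ hb
    rw [if_neg, mul_zero]
    intro h; exact hb (funext h)
  · simp

lemma mul_leftShift_apply (p d : ℕ) [NeZero p]
    (M : Matrix (Fin p → Fin d) (Fin p → Fin d) ℂ) (x y : Fin p → Fin d) :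
    (M * leftShift p d) x y = M x (fun i => y (i + 1)) := by
  simp only [Matrix.mul_apply, leftShift, Matrix.of_apply]
  rw [Finset.sum_eq_single (fun i => y (i + 1))]
  · simp
  · intro b _ hb
    rw [if_neg, mul_zero]
    intro h; exact hb (funext h)
  · simp

/-- `Ω(ℰ,p) = ℰ̂^{⊗p}(L_p)` where `ℰ̂(B) = Σ_k A_k† B A_k`. -/
noncomputable def Omega (p d : ℕ) [NeZero p] {ι : Type*} [Fintype ι]
    (A : ι → Matrix (Fin d) (Fin d) ℂ) :
    Matrix (Fin p → Fin d) (Fin p → Fin d) ℂ :=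
  ∑ k : Fin p → ι,
    tensorFamily p (fun i => (A (k i))ᴴ) * leftShift p d *
      tensorFamily p (fun i => A (k i))

/-- `Θ(ℰ,p) = ℰ̂^{⊗p}(L_p)·R_p
  = Σ_{k₁,…,k_p} A_{k₁}†A_{k₂} ⊗ A_{k₂}†A_{k₃} ⊗ ⋯ ⊗ A_{k_p}†A_{k₁}`. -/
theorem Omega_mul_rightShift_eq (p d : ℕ) [NeZero p] {ι : Type*} [Fintype ι]
    (A : ι → Matrix (Fin d) (Fin d) ℂ) :
    Omega p d A * rightShift p d =
      ∑ k : Fin p → ι,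
        tensorFamily p (fun i => (A (k i))ᴴ * A (k (i + 1))) := by
  ext x y
  rw [Omega, Finset.sum_mul]
  rw [Matrix.sum_apply, Matrix.sum_apply]
  refine Finset.sum_congr rfl fun k _ => ?_
  rw [mul_rightShift_apply]
  rw [show (tensorFamily p (fun i => (A (k i))ᴴ) * leftShift p d *
      tensorFamily p (fun i => A (k i))) = (tensorFamily p (fun i => (A (k i))ᴴ) * leftShift p d) *
      tensorFamily p (fun i => A (k i)) from rfl]
  rw [Matrix.mul_apply]
  simp only [mul_leftShift_apply]
  simp only [tensorFamily, Matrix.of_apply, Matrix.mul_apply]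
  rw [Finset.prod_univ_sum]
  rw [Fintype.piFinset_univ]
  refine Fintype.sum_equiv
    (Equiv.arrowCongr (Equiv.addRight (1 : Fin p)).symm (Equiv.refl (Fin d))) _ _ fun b => ?_
  simp only [Equiv.arrowCongr_apply, Equiv.refl_apply, Equiv.symm_symm,
    Equiv.coe_addRight, Function.comp]
  rw [Finset.prod_mul_distrib]
  congr 1
  refine Fintype.prod_equiv (Equiv.addRight (1 : Fin p)).symm _ _ fun j => ?_
  simp [sub_eq_add_neg]
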